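/- arXiv:math/0507452 — 2 statements merged into one kernel-verified Lean document; each statement's English description precedes it below -/
import Mathlib

section
/- For every real number b > 0, every observed value x̂ ∈ ℝ, and all real numbers a₁ ≤ a₂, the following identity holds: ∫_{x̂}^{∞} L(x; a₁, b) dx + ∫_{a₁}^{a₂} L̃(a; x̂, b) da + ∫_{−∞}^{x̂} L(x; a₂, b) dx = 1. -/
open MeasureTheory

/-- The Laplace probability density `L(x; a, b) = (1/(2b)) * exp (-|x - a| / b)`. -/
noncomputable def laplaceDensity (x a b : ℝ) : ℝ :=
  (1 / (2 * b)) * Real.exp (-|x - a| / b)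

/-- The confidence density of the location parameter `a` given observation `x̂`. -/
noncomputable def laplaceConfidenceDensity (a xhat b : ℝ) : ℝ :=
  (1 / (2 * b)) * Real.exp (-|xhat - a| / b)

open Set Real in
lemma laplace_shift_Ioi (g : ℝ → ℝ) (c t : ℝ) :
    (∫ x in Ioi t, g (x - c)) = ∫ x in Ioi (t - c), g x := by
  rw [← integral_indicator measurableSet_Ioi, ← integral_indicator measurableSet_Ioi,
    ← integral_sub_right_eq_self (Set.indicator (Ioi (t - c)) g) c]
  congr 1; ext x
  simp [Set.indicator_apply, sub_lt_sub_iff_right]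

open Set Real in
lemma laplace_shift_Iic (g : ℝ → ℝ) (c t : ℝ) :
    (∫ x in Iic t, g (x - c)) = ∫ x in Iic (t - c), g x := by
  rw [← integral_indicator measurableSet_Iic, ← integral_indicator measurableSet_Iic,
    ← integral_sub_right_eq_self (Set.indicator (Iic (t - c)) g) c]
  congr 1; ext x
  simp [Set.indicator_apply, sub_le_sub_iff_right]

open Set Real in
lemma laplace_int_Ioi (b : ℝ) (hb : 0 < b) :
    IntegrableOn (fun x : ℝ => (1 / (2 * b)) * exp (-|x| / b)) (Ioi 0) := by
  have h := (exp_neg_integrableOn_Ioi 0 (show (0:ℝ) < 1/b by positivity)).const_mul (1 / (2 * b))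
  refine MeasureTheory.IntegrableOn.congr_fun h (fun x hx => ?_) measurableSet_Ioi
  rw [abs_of_pos hx]; ring_nf

open Set Real in
lemma laplace_integrable (b : ℝ) (hb : 0 < b) :
    Integrable (fun x : ℝ => (1 / (2 * b)) * exp (-|x| / b)) := by
  have h1 := laplace_int_Ioi b hb
  have h2 : IntegrableOn (fun x : ℝ => (1 / (2 * b)) * exp (-|x| / b)) (Iic 0) := by
    rw [← Measure.map_neg_eq_self (volume : Measure ℝ)]
    let m : MeasurableEmbedding fun x : ℝ => -x := (Homeomorph.neg ℝ).measurableEmbedding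
    rw [m.integrableOn_map_iff]
    simp_rw [Function.comp_def, abs_neg, neg_preimage, neg_Iic, neg_zero]
    exact Iff.mpr integrableOn_Ici_iff_integrableOn_Ioi h1
  have h3 := h2.union h1
  rwa [Iic_union_Ioi, integrableOn_univ] at h3

open Set Real in
lemma laplace_total (b : ℝ) (hb : 0 < b) :
    (∫ x : ℝ, (1 / (2 * b)) * exp (-|x| / b)) = 1 := by
  have habs : (∫ x : ℝ, (1 / (2 * b)) * exp (-|x| / b))
      = 2 * ∫ x in Ioi (0:ℝ), (1 / (2 * b)) * exp (-x / b) :=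
    integral_comp_abs (f := fun y => (1 / (2 * b)) * exp (-y / b))
  rw [habs, MeasureTheory.integral_const_mul]
  have hI : (∫ x in Ioi (0:ℝ), exp (-x / b)) = b := by
    have h := integral_comp_mul_left_Ioi (fun x => exp (-x)) 0 (show (0:ℝ) < 1/b by positivity)
    simp only [mul_zero] at h
    rw [show (fun x : ℝ => exp (-x / b)) = (fun x => exp (-(1/b * x))) by ext x; ring_nf]
    rw [h, integral_exp_neg_Ioi]
    field_simp
    simp
  rw [hI]; field_simp

open Set Real in
/-- `∫_{x̂}^{∞} L(x; a₁, b) dx + ∫_{a₁}^{a₂} L̃(a; x̂, b) da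
      + ∫_{−∞}^{x̂} L(x; a₂, b) dx = 1`. -/
theorem laplace_confidence_identity
    (b : ℝ) (hb : 0 < b) (xhat : ℝ) (a₁ a₂ : ℝ) (h : a₁ ≤ a₂) :
    (∫ x in Set.Ioi xhat, laplaceDensity x a₁ b) +
      (∫ a in a₁..a₂, laplaceConfidenceDensity a xhat b) +
        (∫ x in Set.Iic xhat, laplaceDensity x a₂ b) = 1 := by
  set f : ℝ → ℝ := fun x => (1 / (2 * b)) * exp (-|x| / b) with hf
  have hint := laplace_integrable b hb
  have e1 : (∫ x in Set.Ioi xhat, laplaceDensity x a₁ b) = ∫ x in Ioi (xhat - a₁), f x := by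
    rw [← laplace_shift_Ioi f a₁ xhat]; rfl
  have e2 : (∫ a in a₁..a₂, laplaceConfidenceDensity a xhat b)
      = ∫ x in Ioc (xhat - a₂) (xhat - a₁), f x := by
    have : (∫ a in a₁..a₂, laplaceConfidenceDensity a xhat b)
        = ∫ a in a₁..a₂, f (xhat - a) := rfl
    rw [this, intervalIntegral.integral_comp_sub_left f xhat,
      intervalIntegral.integral_of_le (by linarith)]
  have e3 : (∫ x in Set.Iic xhat, laplaceDensity x a₂ b) = ∫ x in Iic (xhat - a₂), f x := by
    rw [← laplace_shift_Iic f a₂ xhat]; rfl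
  rw [e1, e2, e3]
  have huv : xhat - a₂ ≤ xhat - a₁ := by linarith
  have hIic : (∫ x in Ioc (xhat - a₂) (xhat - a₁), f x) + (∫ x in Iic (xhat - a₂), f x)
      = ∫ x in Iic (xhat - a₁), f x := by
    rw [add_comm, ← setIntegral_union (Iic_disjoint_Ioc le_rfl) measurableSet_Ioc
      hint.integrableOn hint.integrableOn, Iic_union_Ioc_eq_Iic huv]
  have hfull : (∫ x in Iic (xhat - a₁), f x) + (∫ x in Ioi (xhat - a₁), f x) = 1 := by
    rw [intervalIntegral.integral_Iic_add_Ioi hint.integrableOn hint.integrableOn]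
    exact laplace_total b hb
  linarith
end

section
/- Fix b > 0 and x̂ ∈ ℝ. Suppose h : ℝ → ℝ is a locally integrable function satisfying, for all real numbers a₁ ≤ a₂, the identity ∫_{x̂}^{∞} L(x; a₁, b) dx + ∫_{a₁}^{a₂} h(a) da + ∫_{−∞}^{x̂} L(x; a₂, b) dx = 1. Then h(a) = L̃(a; x̂, b) for almost every a ∈ ℝ (with respect to Lebesgue measure); that is, h equals the confidence density everywhere except possibly on a set of measure zero. -/
open MeasureTheory Set Real Filter Topology

lemma integrableOn_exp_div_Iic {b : ℝ} (hb : 0 < b) (μ c : ℝ) :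
    IntegrableOn (fun x => Real.exp ((x - μ)/b)) (Iic c) volume := by
  have A : MeasurableEmbedding (fun x : ℝ => -x) :=
    (Homeomorph.neg ℝ).measurableEmbedding
  have h1 : IntegrableOn (fun x => Real.exp (-(1/b) * x) * Real.exp (-μ/b)) (Ioi (-c)) volume :=
    (exp_neg_integrableOn_Ioi (-c) (by positivity)).mul_const _
  have h2 : IntegrableOn (fun x => Real.exp ((-x - μ)/b)) (Ioi (-c)) volume := by
    refine h1.congr_fun (fun x _ => ?_) measurableSet_Ioi
    dsimp only; rw [← Real.exp_add]; ring_nf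
  have key := A.integrableOn_map_iff (f := fun x => Real.exp ((x - μ)/b)) (s := Iic c)
    (μ := volume)
  rw [Measure.map_neg_eq_self (volume : Measure ℝ)] at key
  rw [key]
  have : (fun x : ℝ => -x) ⁻¹' Iic c = Ici (-c) := by ext x; simp [neg_le]
  rw [this]
  rw [integrableOn_Ici_iff_integrableOn_Ioi]
  exact h2

lemma integral_exp_div_Iic {b : ℝ} (hb : 0 < b) (μ c : ℝ) :
    ∫ x in Iic c, Real.exp ((x - μ)/b) = b * Real.exp ((c - μ)/b) := by
  have hderiv : ∀ x ∈ Iic c, HasDerivAt (fun x => b * Real.exp ((x - μ)/b))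
      (Real.exp ((x - μ)/b)) x := by
    intro x _
    have h1 : HasDerivAt (fun x : ℝ => (x - μ)/b) (1/b) x := by
      simpa using ((hasDerivAt_id x).sub_const μ).div_const b
    have := (h1.exp.const_mul b)
    refine this.congr_deriv (Eq.symm ?_)
    field_simp
  have hint := integrableOn_exp_div_Iic hb μ c
  have htend : Tendsto (fun x => b * Real.exp ((x - μ)/b)) atBot (𝓝 0) := by
    rw [show (0:ℝ) = b * 0 by ring]
    refine Tendsto.const_mul b (Real.tendsto_exp_atBot.comp ?_)
    apply Tendsto.atBot_div_const hb
    exact tendsto_atBot_add_const_right _ _ tendsto_id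
  simpa using integral_Iic_of_hasDerivAt_of_tendsto' hderiv hint htend

lemma lapIic_of_ge {b : ℝ} (hb : 0 < b) {xhat a : ℝ} (hax : xhat ≤ a) :
    ∫ x in Iic xhat, laplaceDensity x a b = (1/2) * Real.exp ((xhat - a)/b) := by
  have hcongr : ∀ x ∈ Iic xhat, laplaceDensity x a b = (1/(2*b)) * Real.exp ((x - a)/b) := by
    intro x hx
    have : |x - a| = a - x := by rw [abs_sub_comm]; exact abs_of_nonneg (by simp at hx; linarith)
    rw [laplaceDensity, this]
    ring_nf
  rw [setIntegral_congr_fun measurableSet_Iic hcongr, integral_const_mul,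
    integral_exp_div_Iic hb]
  field_simp

lemma lapIic_of_le {b : ℝ} (hb : 0 < b) {xhat a : ℝ} (hax : a ≤ xhat) :
    ∫ x in Iic xhat, laplaceDensity x a b = 1 - (1/2) * Real.exp ((a - xhat)/b) := by
  have hsplit : Iic xhat = Iic a ∪ Ioc a xhat := (Iic_union_Ioc_eq_Iic hax).symm
  have hcont : Continuous (fun x => laplaceDensity x a b) := by
    unfold laplaceDensity
    fun_prop
  have hint1 : IntegrableOn (fun x => laplaceDensity x a b) (Iic a) volume := by
    refine (IntegrableOn.congr_fun ((integrableOn_exp_div_Iic hb a a).const_mul (1/(2*b)))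
      (fun x hx => ?_) measurableSet_Iic)
    have : |x - a| = a - x := by rw [abs_sub_comm]; exact abs_of_nonneg (by simp at hx; linarith)
    rw [laplaceDensity, this]
    ring_nf
  have hint2 : IntegrableOn (fun x => laplaceDensity x a b) (Ioc a xhat) volume :=
    hcont.integrableOn_Ioc
  rw [hsplit, setIntegral_union (Iic_disjoint_Ioc le_rfl) measurableSet_Ioc hint1 hint2]
  have e1 : ∫ x in Iic a, laplaceDensity x a b = 1/2 := by
    have hcongr : ∀ x ∈ Iic a, laplaceDensity x a b = (1/(2*b)) * Real.exp ((x - a)/b) := by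
      intro x hx
      have : |x - a| = a - x := by rw [abs_sub_comm]; exact abs_of_nonneg (by simp at hx; linarith)
      rw [laplaceDensity, this]
      ring_nf
    rw [setIntegral_congr_fun measurableSet_Iic hcongr, integral_const_mul,
      integral_exp_div_Iic hb]
    field_simp
    simp
  have e2 : ∫ x in Ioc a xhat, laplaceDensity x a b
      = 1/2 - (1/2) * Real.exp ((a - xhat)/b) := by
    rw [← intervalIntegral.integral_of_le hax]
    have hF : ∀ x ∈ uIcc a xhat, HasDerivAt (fun x => -(1/2) * Real.exp ((a - x)/b))
        (laplaceDensity x a b) x := by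
      intro x hx
      rw [uIcc_of_le hax] at hx
      have h1 : HasDerivAt (fun x : ℝ => (a - x)/b) (-1/b) x := by
        simpa using ((hasDerivAt_id x).const_sub a).div_const b
      have h2 := (h1.exp.const_mul (-(1/2) : ℝ))
      refine h2.congr_deriv (Eq.symm ?_)
      have hxa : |x - a| = x - a := abs_of_nonneg (by linarith [hx.1])
      rw [laplaceDensity, hxa, show -(x-a)/b = (a-x)/b by ring]
      field_simp
    rw [intervalIntegral.integral_eq_sub_of_hasDerivAt hF
      (hcont.intervalIntegrable a xhat)]
    simp
    ring
  rw [e1, e2]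
  ring

noncomputable def lapBex (xhat b a : ℝ) : ℝ :=
  if a ≤ xhat then 1 - (1/2) * Real.exp ((a - xhat)/b) else (1/2) * Real.exp ((xhat - a)/b)

lemma lapConf_cont {xhat b : ℝ} : Continuous (fun a => laplaceConfidenceDensity a xhat b) := by
  unfold laplaceConfidenceDensity
  fun_prop

lemma keyL {b : ℝ} (hb : 0 < b) {xhat a₁ a₂ : ℝ} (h12 : a₁ ≤ a₂) (h2x : a₂ ≤ xhat) :
    ∫ a in a₁..a₂, laplaceConfidenceDensity a xhat b
      = (1/2) * Real.exp ((a₂ - xhat)/b) - (1/2) * Real.exp ((a₁ - xhat)/b) := by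
  have hF : ∀ a ∈ uIcc a₁ a₂, HasDerivAt (fun a => (1/2) * Real.exp ((a - xhat)/b))
      (laplaceConfidenceDensity a xhat b) a := by
    intro a ha
    rw [uIcc_of_le h12] at ha
    have h1 : HasDerivAt (fun a : ℝ => (a - xhat)/b) (1/b) a := by
      simpa using ((hasDerivAt_id a).sub_const xhat).div_const b
    have h2 := h1.exp.const_mul ((1:ℝ)/2)
    refine h2.congr_deriv (Eq.symm ?_)
    have : |xhat - a| = xhat - a := abs_of_nonneg (by linarith [ha.2])
    rw [laplaceConfidenceDensity, this, show -(xhat-a)/b = (a-xhat)/b by ring]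
    field_simp
  rw [intervalIntegral.integral_eq_sub_of_hasDerivAt hF
    (lapConf_cont.intervalIntegrable a₁ a₂)]

lemma keyR {b : ℝ} (hb : 0 < b) {xhat a₁ a₂ : ℝ} (h12 : a₁ ≤ a₂) (hx1 : xhat ≤ a₁) :
    ∫ a in a₁..a₂, laplaceConfidenceDensity a xhat b
      = (1/2) * Real.exp ((xhat - a₁)/b) - (1/2) * Real.exp ((xhat - a₂)/b) := by
  have hF : ∀ a ∈ uIcc a₁ a₂, HasDerivAt (fun a => -1/2 * Real.exp ((xhat - a)/b))
      (laplaceConfidenceDensity a xhat b) a := by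
    intro a ha
    rw [uIcc_of_le h12] at ha
    have h1 : HasDerivAt (fun a : ℝ => (xhat - a)/b) (-1/b) a := by
      simpa using ((hasDerivAt_id a).const_sub xhat).div_const b
    have h2 := h1.exp.const_mul (-(1:ℝ)/2)
    refine h2.congr_deriv (Eq.symm ?_)
    have : |xhat - a| = -(xhat - a) := abs_of_nonpos (by linarith [ha.1])
    simp only [laplaceConfidenceDensity]
    rw [this, show -(-(xhat-a))/b = -((xhat-a)/b) * -1 by ring]
    field_simp
  rw [intervalIntegral.integral_eq_sub_of_hasDerivAt hF
    (lapConf_cont.intervalIntegrable a₁ a₂)]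
  ring

lemma keyAll {b : ℝ} (hb : 0 < b) {xhat a₁ a₂ : ℝ} (h12 : a₁ ≤ a₂) :
    ∫ a in a₁..a₂, laplaceConfidenceDensity a xhat b = lapBex xhat b a₁ - lapBex xhat b a₂ := by
  have bexL : ∀ a ≤ xhat, lapBex xhat b a = 1 - (1/2) * Real.exp ((a - xhat)/b) := by
    intro a ha; rw [lapBex, if_pos ha]
  have bexR : ∀ a, xhat ≤ a → lapBex xhat b a = (1/2) * Real.exp ((xhat - a)/b) := by
    intro a ha
    rcases eq_or_lt_of_le ha with rfl | hlt
    · rw [lapBex, if_pos le_rfl]; norm_num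
    · rw [lapBex, if_neg (not_le.mpr hlt)]
  rcases le_total a₂ xhat with h2x | hx2
  · rw [keyL hb h12 h2x, bexL a₁ (h12.trans h2x), bexL a₂ h2x]; ring
  · rcases le_total xhat a₁ with hx1 | h1x
    · rw [keyR hb h12 hx1, bexR a₁ hx1, bexR a₂ (hx1.trans h12)]
    · rw [← intervalIntegral.integral_add_adjacent_intervals
        (lapConf_cont.intervalIntegrable a₁ xhat) (lapConf_cont.intervalIntegrable xhat a₂),
        keyL hb h1x le_rfl, keyR hb hx2 le_rfl, bexL a₁ h1x, bexR a₂ hx2]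
      simp
      ring

/-- A locally integrable function satisfying the interval identity coincides
with the confidence density almost everywhere (w.r.t. Lebesgue measure). -/
theorem laplace_confidence_density_unique_ae
    (b : ℝ) (hb : 0 < b) (xhat : ℝ) (h : ℝ → ℝ)
    (hloc : LocallyIntegrable h volume)
    (hid : ∀ a₁ a₂ : ℝ, a₁ ≤ a₂ →
      (∫ x in Set.Ioi xhat, laplaceDensity x a₁ b) +
        (∫ a in a₁..a₂, h a) +
          (∫ x in Set.Iic xhat, laplaceDensity x a₂ b) = 1) :
    ∀ᵐ a : ℝ, h a = laplaceConfidenceDensity a xhat b := by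
  set g := fun a => laplaceConfidenceDensity a xhat b with hg
  have hBfun : ∀ a, ∫ x in Iic xhat, laplaceDensity x a b = lapBex xhat b a := by
    intro a
    rcases le_or_gt a xhat with hax | hax
    · rw [lapIic_of_le hb hax, lapBex, if_pos hax]
    · rw [lapIic_of_ge hb hax.le, lapBex, if_neg (not_le.mpr hax)]
  have hA : ∀ a, (∫ x in Ioi xhat, laplaceDensity x a b) = 1 - lapBex xhat b a := by
    intro a
    have := hid a a le_rfl
    rw [intervalIntegral.integral_same, hBfun a] at this
    linarith
  have hEq : ∀ a₁ a₂ : ℝ, a₁ ≤ a₂ → ∫ a in a₁..a₂, h a = ∫ a in a₁..a₂, g a := by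
    intro a₁ a₂ h12
    have H := hid a₁ a₂ h12
    rw [hA a₁, hBfun a₂] at H
    rw [hg, keyAll hb h12]
    linarith
  have hInt : ∀ x : ℝ, ∀ r, 0 < r →
      ∫ y in Metric.closedBall x r, h y = ∫ y in Metric.closedBall x r, g y := by
    intro x r hr
    rw [Real.closedBall_eq_Icc, integral_Icc_eq_integral_Ioc, integral_Icc_eq_integral_Ioc,
      ← intervalIntegral.integral_of_le (by linarith), ← intervalIntegral.integral_of_le (by linarith)]
    exact hEq _ _ (by linarith)
  have hgloc : LocallyIntegrable g volume := lapConf_cont.locallyIntegrable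
  filter_upwards [IsUnifLocDoublingMeasure.ae_tendsto_average (μ := volume) hloc 1,
    IsUnifLocDoublingMeasure.ae_tendsto_average (μ := volume) hgloc 1] with x hx hgx
  have hδpos : ∀ n : ℕ, (0:ℝ) < 1/(n+1) := fun n => by positivity
  have δlim : Tendsto (fun n : ℕ => (1:ℝ)/(n+1)) atTop (𝓝[>] 0) := by
    refine tendsto_nhdsWithin_of_tendsto_nhds_of_eventually_within _
      tendsto_one_div_add_atTop_nhds_zero_nat (Eventually.of_forall fun n => hδpos n)
  have hmem : ∀ᶠ n : ℕ in atTop, x ∈ Metric.closedBall x (1 * (1/(n+1))) :=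
    Eventually.of_forall fun n => by
      simp only [Metric.mem_closedBall, dist_self, one_mul]
      exact (hδpos n).le
  have t1 := hx (fun _ => x) (fun n : ℕ => 1/(n+1)) δlim hmem
  have t2 := hgx (fun _ => x) (fun n : ℕ => 1/(n+1)) δlim hmem
  have heqavg : (fun n : ℕ => ⨍ y in Metric.closedBall x (1/(n+1)), h y)
      = fun n : ℕ => ⨍ y in Metric.closedBall x (1/(n+1)), g y := by
    funext n
    rw [setAverage_eq, setAverage_eq, hInt x _ (hδpos n)]
  rw [heqavg] at t1
  exact tendsto_nhds_unique t1 t2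
end
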